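/- Under the assumptions 0 < α < π, |β| ≤ α, β > α − π, the function G(γ) = (y₁(γ)+y₂(γ))²/(−sin γ) satisfies G'(γ) = σ(γ)/q(γ)² on the interior of Γ = [α−π, β]∩(−∞,0), where q(γ) = −sin γ/(y₁(γ)+y₂(γ)), σ(γ) = cos γ + (sin γ/(y₁+y₂))·(√(sin(α−γ)) + √(sin(β−γ))), y₁(γ) = (1/2)∫₀^{α−γ}√(sin τ)dτ, and y₂(γ) = (1/2)∫₀^{β−γ}√(sin τ)dτ. -/

import Mathlib

open Real Set

noncomputable def y₁ (α : ℝ) (γ : ℝ) : ℝ := (1/2) * ∫ τ in (0:ℝ)..(α - γ), Real.sqrt (Real.sin τ)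
noncomputable def y₂ (β : ℝ) (γ : ℝ) : ℝ := (1/2) * ∫ τ in (0:ℝ)..(β - γ), Real.sqrt (Real.sin τ)
noncomputable def Gfun (α β : ℝ) (γ : ℝ) : ℝ := (y₁ α γ + y₂ β γ) ^ 2 / (-Real.sin γ)
noncomputable def qfun (α β : ℝ) (γ : ℝ) : ℝ := -Real.sin γ / (y₁ α γ + y₂ β γ)
noncomputable def σfun (α β : ℝ) (γ : ℝ) : ℝ :=
  Real.cos γ + (Real.sin γ / (y₁ α γ + y₂ β γ)) *
    (Real.sqrt (Real.sin (α - γ)) + Real.sqrt (Real.sin (β - γ)))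

lemma f_cont : Continuous (fun τ : ℝ => Real.sqrt (Real.sin τ)) :=
  Real.continuous_sqrt.comp Real.continuous_sin

lemma F_hasDeriv (x : ℝ) :
    HasDerivAt (fun x : ℝ => ∫ τ in (0:ℝ)..x, Real.sqrt (Real.sin τ))
      (Real.sqrt (Real.sin x)) x :=
  intervalIntegral.integral_hasDerivAt_right
    (f_cont.intervalIntegrable _ _)
    (f_cont.stronglyMeasurableAtFilter _ _)
    f_cont.continuousAt

lemma y_hasDeriv (a γ : ℝ) :
    HasDerivAt (fun γ => (1/2) * ∫ τ in (0:ℝ)..(a - γ), Real.sqrt (Real.sin τ))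
      (-(1/2) * Real.sqrt (Real.sin (a - γ))) γ := by
  have h1 : HasDerivAt (fun γ : ℝ => a - γ) (-1) γ := by
    exact (hasDerivAt_id γ).const_sub a
  have h2 := (F_hasDeriv (a - γ)).comp γ h1
  have := h2.const_mul (1/2 : ℝ)
  exact this.congr_deriv (by ring)

theorem G_deriv_eq (α β γ : ℝ)
    (hα : 0 < α) (hα' : α < π) (hβ : |β| ≤ α) (hβ' : β > α - π)
    (hγ1 : α - π < γ) (hγ2 : γ < β) (hγ0 : γ < 0) :
    deriv (Gfun α β) γ = σfun α β γ / (qfun α β γ) ^ 2 := by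
  have hβα : β ≤ α := (abs_le.mp hβ).2
  have hsin : Real.sin γ < 0 := by
    apply Real.sin_neg_of_neg_of_neg_pi_lt hγ0
    linarith
  have hs : Real.sin γ ≠ 0 := ne_of_lt hsin
  -- positivity of y₁
  have hαγ0 : 0 < α - γ := by linarith
  have hαγπ : α - γ < π := by linarith
  have hy1 : 0 < y₁ α γ := by
    unfold y₁
    have : 0 < ∫ τ in (0:ℝ)..(α - γ), Real.sqrt (Real.sin τ) := by
      apply intervalIntegral.intervalIntegral_pos_of_pos_on
        (f_cont.intervalIntegrable _ _)
      · intro x hx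
        exact Real.sqrt_pos.mpr (Real.sin_pos_of_pos_of_lt_pi hx.1 (lt_trans hx.2 hαγπ))
      · exact hαγ0
    linarith
  have hy2 : 0 ≤ y₂ β γ := by
    unfold y₂
    have : 0 ≤ ∫ τ in (0:ℝ)..(β - γ), Real.sqrt (Real.sin τ) := by
      apply intervalIntegral.integral_nonneg (by linarith)
      intro x _
      exact Real.sqrt_nonneg _
    linarith
  have hS : 0 < y₁ α γ + y₂ β γ := by linarith
  have hSne : y₁ α γ + y₂ β γ ≠ 0 := ne_of_gt hS
  set A := Real.sqrt (Real.sin (α - γ))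
  set B := Real.sqrt (Real.sin (β - γ))
  have hS' : HasDerivAt (fun γ => y₁ α γ + y₂ β γ) (-(1/2) * A + -(1/2) * B) γ :=
    (y_hasDeriv α γ).add (y_hasDeriv β γ)
  have hnum : HasDerivAt (fun γ => (y₁ α γ + y₂ β γ) ^ 2)
      (2 * (y₁ α γ + y₂ β γ) * (-(1/2) * A + -(1/2) * B)) γ := by
    have := hS'.pow 2
    exact this.congr_deriv (by norm_num)
  have hden : HasDerivAt (fun γ : ℝ => -Real.sin γ) (-Real.cos γ) γ := by
    exact (Real.hasDerivAt_sin γ).neg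
  have hG : HasDerivAt (Gfun α β)
      ((2 * (y₁ α γ + y₂ β γ) * (-(1/2) * A + -(1/2) * B) * (-Real.sin γ)
        - (y₁ α γ + y₂ β γ) ^ 2 * (-Real.cos γ)) / (-Real.sin γ) ^ 2) γ :=
    hnum.div hden (by simpa using hs)
  rw [hG.deriv]
  unfold σfun qfun
  field_simp
  ring
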